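/- Let K be a number field whose unit group O_K^× has rank at least 1. For ξ in the mixed space E, the following are equivalent: (i) the orbit Orb(ξ) = {ι(ε)·ξ + ι(O_K) : ε ∈ O_K^×} is a finite subset of the quotient group E/ι(O_K); (ii) there exists a unit ε ∈ O_K^× of infinite order such that Orb_ε(ξ) = {ι(ε)ⁿ·ξ + ι(O_K) : n ∈ ℤ} is finite; (iii) ξ ∈ ι(K), i.e. ξ is the image of an element of K under the mixed embedding. -/

import Mathlib

open NumberField NumberField.InfinitePlace

set_option maxHeartbeats 1000000

/-- For a number field `K` of unit rank at least `1` and a point `ξ` of the mixed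
space, the following are equivalent: (i) the orbit of `ξ + ι(O_K)` under the unit
group is finite, (ii) the orbit of `ξ + ι(O_K)` under the powers of some unit of
infinite order is finite, (iii) `ξ` lies in the image of `K` under the mixed
embedding. -/
theorem stmt_5 (K : Type*) [Field K] [NumberField K]
    (hrank : 1 ≤ NumberField.Units.rank K)
    (ξ : mixedEmbedding.mixedSpace K) :
    List.TFAE
      [ Set.Finite {c : mixedEmbedding.mixedSpace K ⧸
            (mixedEmbedding.integerLattice K).toAddSubgroup |
          ∃ ε : (𝓞 K)ˣ, c = QuotientAddGroup.mk (mixedEmbedding K (ε : K) * ξ)},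
        ∃ ε : (𝓞 K)ˣ, ¬ IsOfFinOrder ε ∧
          Set.Finite {c : mixedEmbedding.mixedSpace K ⧸
              (mixedEmbedding.integerLattice K).toAddSubgroup |
            ∃ n : ℤ, c = QuotientAddGroup.mk (mixedEmbedding K ((ε : K) ^ n) * ξ)},
        ξ ∈ Set.range (mixedEmbedding K) ] := by
  set ι := mixedEmbedding K with hι
  set L := (mixedEmbedding.integerLattice K).toAddSubgroup with hL
  have memL : ∀ v : mixedEmbedding.mixedSpace K,
      v ∈ L ↔ ∃ t : 𝓞 K, ι (algebraMap (𝓞 K) K t) = v := by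
    intro v
    simp [hL, hι, mixedEmbedding.integerLattice, LinearMap.mem_range,
      Submodule.mem_toAddSubgroup]
  tfae_have 3 → 1
  | ⟨x, hx⟩ => by
    obtain ⟨a, b, hb, hab⟩ := IsFractionRing.div_surjective (A := 𝓞 K) x
    have hbne : b ≠ 0 := nonZeroDivisors.ne_zero hb
    have hbK : algebraMap (𝓞 K) K b ≠ 0 := by simpa using hbne
    have hfty : Fintype (𝓞 K ⧸ Ideal.span {b}) :=
      have := Ideal.finiteQuotientOfFreeOfNeBot (Ideal.span {b}) (by simpa [Ideal.span_singleton_eq_bot] using hbne); Fintype.ofFinite _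
    have hfin : Finite (𝓞 K ⧸ Ideal.span {b}) := Finite.of_fintype _
    set f : 𝓞 K ⧸ Ideal.span {b} →
        mixedEmbedding.mixedSpace K ⧸ L :=
      Quotient.lift
        (fun c : 𝓞 K =>
          (QuotientAddGroup.mk (ι (algebraMap (𝓞 K) K c / algebraMap (𝓞 K) K b)) :
            mixedEmbedding.mixedSpace K ⧸ L))
        (by
          intro c c' hcc'
          have h1 : c - c' ∈ Ideal.span {b} := (Submodule.quotientRel_def _).mp hcc'
          obtain ⟨t, ht⟩ := Ideal.mem_span_singleton'.mp h1
          have hK : algebraMap (𝓞 K) K t * algebraMap (𝓞 K) K b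
              = algebraMap (𝓞 K) K c - algebraMap (𝓞 K) K c' := by
            rw [← map_mul, ht, map_sub]
          refine QuotientAddGroup.eq.mpr ?_
          rw [memL]
          refine ⟨-t, ?_⟩
          have hKey : algebraMap (𝓞 K) K (-t)
              = -(algebraMap (𝓞 K) K c / algebraMap (𝓞 K) K b)
                + algebraMap (𝓞 K) K c' / algebraMap (𝓞 K) K b := by
            rw [neg_add_eq_sub, div_sub_div_same, map_neg, eq_div_iff hbK, neg_mul, hK]
            ring
          rw [hKey, map_add, map_neg])
    refine Set.Finite.subset (Set.finite_range f) ?_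
    rintro c ⟨ε, rfl⟩
    refine ⟨Ideal.Quotient.mk _ ((ε : 𝓞 K) * a), ?_⟩
    show (QuotientAddGroup.mk (ι (algebraMap (𝓞 K) K ((ε : 𝓞 K) * a) / algebraMap (𝓞 K) K b)) :
      mixedEmbedding.mixedSpace K ⧸ L) = _
    congr 1
    rw [map_mul, mul_div_assoc, hab, map_mul, hx]
  tfae_have 1 → 2
  | hfin => by
    refine ⟨Units.fundSystem K ⟨0, hrank⟩, ?_, ?_⟩
    · intro hord
      have h1 : Units.logEmbedding K
          (Additive.ofMul (Units.fundSystem K ⟨0, hrank⟩)) = 0 :=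
        Units.dirichletUnitTheorem.logEmbedding_eq_zero_iff.mpr
          ((CommGroup.mem_torsion _).mpr hord)
      have h2 := Units.logEmbedding_fundSystem (K := K) ⟨0, hrank⟩
      rw [h1] at h2
      have h3 : Units.basisUnitLattice K ⟨0, hrank⟩ ≠ 0 :=
        (Units.basisUnitLattice K).ne_zero ⟨0, hrank⟩
      exact h3 (ZeroMemClass.coe_eq_zero.mp h2.symm)
    · refine hfin.subset ?_
      rintro c ⟨n, rfl⟩
      exact ⟨Units.fundSystem K ⟨0, hrank⟩ ^ n, by rw [Units.coe_zpow]⟩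
  tfae_have 2 → 3
  | ⟨ε, hord, hfin⟩ => by
    set g : ℤ → mixedEmbedding.mixedSpace K ⧸ L :=
      fun n => QuotientAddGroup.mk (ι ((ε : K) ^ n) * ξ) with hg
    have hrng : Set.Finite (Set.range g) := hfin.subset (by rintro c ⟨n, rfl⟩; exact ⟨n, rfl⟩)
    have hninj : ¬ Function.Injective g := fun hinj =>
      Set.infinite_range_of_injective hinj hrng
    obtain ⟨m, n, hmn, hne⟩ := Function.not_injective_iff.mp hninj
    have hεK : (ε : K) ≠ 0 := by
      simp [RingOfIntegers.coe_ne_zero_iff.mpr ε.ne_zero]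
    have hb : (ε : K) ^ n - (ε : K) ^ m ≠ 0 := by
      intro h
      apply hord
      have h' : (ε : K) ^ n = (ε : K) ^ m := sub_eq_zero.mp h
      have h2 : (ε : K) ^ (n - m) = 1 := by
        rw [zpow_sub₀ hεK, h', div_self (zpow_ne_zero _ hεK)]
      have h3 : ε ^ (n - m) = 1 := by
        apply Units.ext
        apply IsFractionRing.injective (𝓞 K) K
        simp only [Units.val_one, map_one]
        exact (Units.coe_zpow ε (n - m)).trans h2
      exact isOfFinOrder_iff_zpow_eq_one.mpr ⟨n - m, sub_ne_zero.mpr (Ne.symm hne), h3⟩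
    have hdiff := QuotientAddGroup.eq.mp hmn
    rw [memL] at hdiff
    obtain ⟨t, ht⟩ := hdiff
    refine ⟨((ε : K) ^ n - (ε : K) ^ m)⁻¹ * algebraMap (𝓞 K) K t, ?_⟩
    have key : ι (algebraMap (𝓞 K) K t) = ι ((ε : K) ^ n - (ε : K) ^ m) * ξ := by
      rw [ht, map_sub, sub_mul, neg_add_eq_sub]
    rw [map_mul, key, ← mul_assoc, ← map_mul, inv_mul_cancel₀ hb, map_one, one_mul]
  tfae_finish
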